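/- Let X be a chain connected uniform space and x₀ ∈ X. Then X is uniformly joinable if and only if the endpoint projection π_X : GP(X,x₀) → X generates the uniform structure of X. -/

import Mathlib

open UniformSpace Filter Function
open scoped Uniformity

universe u v

variable {X : Type u} {Y : Type v}

/-- An `E`-chain: consecutive pairs belong to `E`. -/
def IsEChain (E : Set (X × X)) (l : List X) : Prop :=
  l.Chain' fun a b => (a, b) ∈ E

/-- Homotopy rel endpoints of edge-paths in the Rips complex `R(X,E)`. -/
inductive RipsHtpy (E : Set (X × X)) : List X → List X → Prop
  | refl (l : List X) : RipsHtpy E l l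
  | symm {l₁ l₂ : List X} : RipsHtpy E l₁ l₂ → RipsHtpy E l₂ l₁
  | trans {l₁ l₂ l₃ : List X} : RipsHtpy E l₁ l₂ → RipsHtpy E l₂ l₃ → RipsHtpy E l₁ l₃
  | ins (l₁ l₂ : List X) (a v b : X) :
      (a, v) ∈ E → (v, b) ∈ E → (a, b) ∈ E →
      RipsHtpy E (l₁ ++ a :: b :: l₂) (l₁ ++ a :: v :: b :: l₂)

/-- `E`-homotopy of chains (endpoints may move within `E`). -/
def EHomotopic (E : Set (X × X)) (c d : List X) : Prop :=
  ∃ xc xd yc yd : X, c.head? = some xc ∧ d.head? = some xd ∧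
    c.getLast? = some yc ∧ d.getLast? = some yd ∧
    (xc, xd) ∈ E ∧ (yc, yd) ∈ E ∧
    RipsHtpy E c (xc :: (d ++ [yc]))

/-- The image `f(E)` of a relation under `f`. -/
def fimg (f : X → Y) (E : Set (X × X)) : Set (Y × Y) := Prod.map f f '' E

/-- A generalized (uniform) path from `x` to `y`. -/
structure GenPath (X : Type u) [UniformSpace X] (x y : X) where
  c : Set (X × X) → List X
  chain : ∀ E ∈ 𝓤 X, IsEChain E (c E)
  head : ∀ E ∈ 𝓤 X, (c E).head? = some x
  last : ∀ E ∈ 𝓤 X, (c E).getLast? = some y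
  compat : ∀ E ∈ 𝓤 X, ∀ F ∈ 𝓤 X, F ⊆ E → RipsHtpy E (c F) (c E)

/-- A generalized path is `E`-short if its `E`-term is the edge `e(x,y)`. -/
def GenPath.EShort [UniformSpace X] {x y : X} (p : GenPath X x y) (E : Set (X × X)) : Prop :=
  (x, y) ∈ E ∧ RipsHtpy E (p.c E) [x, y]

/-- `X` is joinable: any two points are joined by a generalized path. -/
def Joinable (X : Type u) [UniformSpace X] : Prop :=
  ∀ x y : X, Nonempty (GenPath X x y)

/-- `X` is uniformly joinable. -/
def UniformlyJoinable (X : Type u) [UniformSpace X] : Prop :=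
  ∀ E ∈ 𝓤 X, ∃ F ∈ 𝓤 X, ∀ x y : X, (x, y) ∈ F → ∃ p : GenPath X x y, p.EShort E

/-- `X` is chain connected. -/
def ChainConnected (X : Type u) [UniformSpace X] : Prop :=
  ∀ E ∈ 𝓤 X, ∀ x y : X, ∃ l : List X,
    IsEChain E l ∧ l.head? = some x ∧ l.getLast? = some y

/-- `f` generates the uniform structure of `Y`. -/
def GeneratesUS [UniformSpace X] [UniformSpace Y] (f : X → Y) : Prop :=
  (∀ S ∈ 𝓤 Y, ∃ E ∈ 𝓤 X, fimg f E ⊆ S) ∧ ∀ E ∈ 𝓤 X, fimg f E ∈ 𝓤 Y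

theorem RipsHtpy.map {E : Set (X × X)} {E' : Set (Y × Y)} (f : X → Y)
    (h : ∀ a b : X, (a, b) ∈ E → (f a, f b) ∈ E') :
    ∀ {l₁ l₂ : List X}, RipsHtpy E l₁ l₂ → RipsHtpy E' (l₁.map f) (l₂.map f) := by
  intro l₁ l₂ H
  induction H with
  | refl l => exact .refl _
  | symm _ ih => exact .symm ih
  | trans _ _ ih₁ ih₂ => exact .trans ih₁ ih₂
  | ins l₁ l₂ a v b h₁ h₂ h₃ =>
      simpa using RipsHtpy.ins (l₁.map f) (l₂.map f) (f a) (f v) (f b)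
        (h a v h₁) (h v b h₂) (h a b h₃)

theorem GeneratesUS.preimage [UniformSpace X] [UniformSpace Y] {f : X → Y}
    (hf : GeneratesUS f) : ∀ S ∈ 𝓤 Y, Prod.map f f ⁻¹' S ∈ 𝓤 X := by
  intro S hS
  obtain ⟨E, hE, hES⟩ := hf.1 S hS
  exact Filter.mem_of_superset hE fun p hp => hES ⟨p, hp, rfl⟩

/-- The pushforward of a generalized path along a map inducing the uniformity. -/
def GenPath.map [UniformSpace X] [UniformSpace Y] (f : X → Y)
    (hf : ∀ S ∈ 𝓤 Y, Prod.map f f ⁻¹' S ∈ 𝓤 X) {x y : X} (p : GenPath X x y) :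
    GenPath Y (f x) (f y) where
  c := fun F => (p.c (Prod.map f f ⁻¹' F)).map f
  chain := fun F hF => List.isChain_map_of_isChain f (fun a b hab => hab) (p.chain _ (hf F hF))
  head := fun F hF => by
    rw [List.head?_map, p.head _ (hf F hF)]; rfl
  last := fun F hF => by
    rw [List.getLast?_map, p.last _ (hf F hF)]; rfl
  compat := fun E hE F hF hFE =>
    RipsHtpy.map f (fun a b hab => hab)
      (p.compat _ (hf E hE) _ (hf F hF) (Set.preimage_mono hFE))

/-- The space of generalized paths starting at `x₀`. -/
def GPSpace (X : Type u) [UniformSpace X] (x₀ : X) := Σ y : X, GenPath X x₀ y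

/-- The endpoint projection. -/
def GPSpace.endpoint [UniformSpace X] {x₀ : X} (c : GPSpace X x₀) : X := c.1

/-- The basic entourage `E*` on `GP(X,x₀)`. -/
def EstarGP [UniformSpace X] (x₀ : X) (E : Set (X × X)) :
    Set (GPSpace X x₀ × GPSpace X x₀) :=
  { q | EHomotopic E (q.1.2.c E) (q.2.2.c E) }

/-- The induced map on spaces of generalized paths. -/
def gpMap [UniformSpace X] [UniformSpace Y] (f : X → Y)
    (hf : ∀ S ∈ 𝓤 Y, Prod.map f f ⁻¹' S ∈ 𝓤 X) (x₀ : X) :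
    GPSpace X x₀ → GPSpace Y (f x₀) :=
  fun c => ⟨f c.1, c.2.map f hf⟩

/-- The image under the endpoint projection `π_X : GP(X,x₀) → X` of the basic
entourage `E*`. -/
def piEstarGP [UniformSpace X] (x₀ : X) (E : Set (X × X)) : Set (X × X) :=
  (fun q : GPSpace X x₀ × GPSpace X x₀ => (q.1.endpoint, q.2.endpoint)) '' EstarGP x₀ E


/-! ### Auxiliary lemmas -/

section Aux

theorem RipsHtpy.mono {E F : Set (X × X)} (hEF : E ⊆ F) :
    ∀ {l m : List X}, RipsHtpy E l m → RipsHtpy F l m := by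
  intro l m h
  induction h with
  | refl l => exact .refl _
  | symm _ ih => exact .symm ih
  | trans _ _ ih₁ ih₂ => exact .trans ih₁ ih₂
  | ins l₁ l₂ a v b h₁ h₂ h₃ => exact .ins l₁ l₂ a v b (hEF h₁) (hEF h₂) (hEF h₃)

theorem RipsHtpy.appendRight {E : Set (X × X)} {l l' : List X} (m : List X)
    (h : RipsHtpy E l l') : RipsHtpy E (l ++ m) (l' ++ m) := by
  induction h with
  | refl l => exact .refl _
  | symm _ ih => exact .symm ih
  | trans _ _ ih₁ ih₂ => exact .trans ih₁ ih₂
  | ins l₁ l₂ a v b h₁ h₂ h₃ =>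
      simpa [List.append_assoc] using RipsHtpy.ins l₁ (l₂ ++ m) a v b h₁ h₂ h₃

theorem RipsHtpy.appendLeft {E : Set (X × X)} (l : List X) {m m' : List X}
    (h : RipsHtpy E m m') : RipsHtpy E (l ++ m) (l ++ m') := by
  induction h with
  | refl l => exact .refl _
  | symm _ ih => exact .symm ih
  | trans _ _ ih₁ ih₂ => exact .trans ih₁ ih₂
  | ins l₁ l₂ a v b h₁ h₂ h₃ =>
      simpa [List.append_assoc] using RipsHtpy.ins (l ++ l₁) l₂ a v b h₁ h₂ h₃

theorem RipsHtpy.rev {E : Set (X × X)} (hs : ∀ a b : X, (a, b) ∈ E → (b, a) ∈ E) :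
    ∀ {l m : List X}, RipsHtpy E l m → RipsHtpy E l.reverse m.reverse := by
  intro l m h
  induction h with
  | refl l => exact .refl _
  | symm _ ih => exact .symm ih
  | trans _ _ ih₁ ih₂ => exact .trans ih₁ ih₂
  | ins l₁ l₂ a v b h₁ h₂ h₃ =>
      simpa [List.reverse_append, List.append_assoc] using
        RipsHtpy.ins l₂.reverse l₁.reverse b v a (hs _ _ h₂) (hs _ _ h₁) (hs _ _ h₃)

/-- duplicating the head of a chain with at least two vertices -/
theorem RipsHtpy.dupHead {E : Set (X × X)} (l : List X) (x w : X)
    (hxx : (x, x) ∈ E) (hxw : (x, w) ∈ E) :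
    RipsHtpy E (x :: w :: l) (x :: x :: w :: l) :=
  RipsHtpy.ins [] l x x w hxx hxw hxw

/-- appending a backtrack `[w, z]` at the end of a chain ending with `[u, z]`. -/
theorem backtrack_htpy {E : Set (X × X)} (hr : ∀ x : X, (x, x) ∈ E)
    (c' : List X) (u z w : X) (huz : (u, z) ∈ E) (hzw : (z, w) ∈ E) (hwz : (w, z) ∈ E) :
    RipsHtpy E (c' ++ [u, z]) ((c' ++ [u, z]) ++ [w, z]) := by
  have h1 : RipsHtpy E (c' ++ [u, z]) (c' ++ [u, z, z]) :=
    RipsHtpy.ins c' [] u z z huz (hr z) huz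
  have h2 : RipsHtpy E (c' ++ [u, z, z]) (c' ++ [u, z, w, z]) := by
    simpa [List.append_assoc] using RipsHtpy.ins (c' ++ [u]) [] z w z hzw hwz (hr z)
  have e : (c' ++ [u, z]) ++ [w, z] = c' ++ [u, z, w, z] := by simp
  rw [e]; exact h1.trans h2

/-- The cancellation lemma: going backwards along a chain and forwards again is
homotopic to nothing. -/
theorem cancel_htpy {E : Set (X × X)} (hs : ∀ a b : X, (a, b) ∈ E → (b, a) ∈ E)
    (hr : ∀ x : X, (x, x) ∈ E) :
    ∀ (m : List X) (a b : X), IsEChain E m → m.getLast? = some b → (a, b) ∈ E →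
      RipsHtpy E (a :: (m.reverse ++ m.tail)) [a, b] := by
  intro m
  induction m with
  | nil => intro a b _ h _; simp at h
  | cons u rest ih =>
    intro a b hch hlast hab
    cases rest with
    | nil =>
        simp at hlast; subst hlast
        simpa using RipsHtpy.refl [a, u]
    | cons w s =>
        have huw : (u, w) ∈ E := (List.isChain_cons_cons.mp hch).1
        have hch' : IsEChain E (w :: s) := (List.isChain_cons_cons.mp hch).2
        have hlast' : (w :: s).getLast? = some b := by simpa using hlast
        have ihh := ih a b hch' hlast' hab
        have step1 : RipsHtpy E ((a :: s.reverse) ++ w :: w :: s)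
            ((a :: s.reverse) ++ w :: u :: w :: s) :=
          RipsHtpy.ins _ _ w u w (hs _ _ huw) huw (hr w)
        have e1 : a :: ((u :: w :: s).reverse ++ (w :: s))
            = (a :: s.reverse) ++ w :: u :: w :: s := by simp
        simp only [List.tail_cons]
        rw [e1]
        refine RipsHtpy.trans (RipsHtpy.symm step1) ?_
        cases s with
        | nil =>
            simp at hlast'; subst hlast'
            exact RipsHtpy.symm
              (by simpa using RipsHtpy.ins ([] : List X) ([] : List X) a w w hab (hr w) hab)
        | cons y s' =>
            have hwy : (w, y) ∈ E := (List.isChain_cons_cons.mp hch').1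
            have step2 : RipsHtpy E ((a :: (y :: s').reverse) ++ w :: y :: s')
                ((a :: (y :: s').reverse) ++ w :: w :: y :: s') :=
              RipsHtpy.ins _ _ w w y (hr w) hwy hwy
            refine RipsHtpy.trans (RipsHtpy.symm step2) ?_
            have e2 : (a :: (y :: s').reverse) ++ w :: y :: s'
                = a :: ((w :: y :: s').reverse ++ (y :: s')) := by simp
            rw [e2]; exact ihh

theorem two_last :
    ∀ (l : List X) (x y : X), ∃ c' u z,
      x :: y :: l = c' ++ [u, z] ∧ (x :: y :: l).getLast? = some z := by
  intro l
  induction l with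
  | nil => intro x y; exact ⟨[], x, y, rfl, rfl⟩
  | cons w t ih =>
    intro x y
    obtain ⟨c', u, z, he, hl⟩ := ih y w
    refine ⟨x :: c', u, z, by rw [show y :: w :: t = c' ++ [u, z] from he]; simp, by simpa using hl⟩

variable [UniformSpace X]

theorem GenPath.c_ne_nil {x y : X} (p : GenPath X x y) {E : Set (X × X)} (hE : E ∈ 𝓤 X) :
    p.c E ≠ [] := by
  intro h
  have := p.head E hE
  rw [h] at this
  simp at this

/-- The constant generalized path. -/
def GenPath.refl' (x : X) : GenPath X x x where
  c _ := [x]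
  chain _ _ := List.isChain_singleton x
  head _ _ := rfl
  last _ _ := rfl
  compat _ _ _ _ _ := RipsHtpy.refl _

/-- Concatenation of generalized paths. -/
def GenPath.concat {x y z : X} (p : GenPath X x y) (q : GenPath X y z) : GenPath X x z where
  c G := p.c G ++ q.c G
  chain G hG := by
    refine List.isChain_append.mpr ⟨p.chain G hG, q.chain G hG, ?_⟩
    intro a ha b hb
    rw [p.last G hG] at ha
    rw [q.head G hG] at hb
    simp only [Option.mem_some_iff] at ha hb
    subst ha; subst hb
    exact refl_mem_uniformity hG
  head G hG := by rw [List.head?_append_of_ne_nil _ (p.c_ne_nil hG), p.head G hG]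
  last G hG := by rw [List.getLast?_append_of_ne_nil _ (q.c_ne_nil hG), q.last G hG]
  compat G hG F hF hFG :=
    (RipsHtpy.appendRight _ (p.compat G hG F hF hFG)).trans
      (RipsHtpy.appendLeft _ (q.compat G hG F hF hFG))

/-- Padding a generalized path with an extra copy of its starting point. -/
def GenPath.pad {x y : X} (p : GenPath X x y) : GenPath X x y where
  c G := x :: p.c G
  chain G hG := by
    refine List.isChain_cons.mpr ⟨?_, p.chain G hG⟩
    intro b hb
    rw [p.head G hG] at hb
    simp only [Option.mem_some_iff] at hb
    subst hb
    exact refl_mem_uniformity hG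
  head _ _ := rfl
  last G hG := by
    show (x :: p.c G).getLast? = some y
    rw [show x :: p.c G = [x] ++ p.c G from rfl,
      List.getLast?_append_of_ne_nil _ (p.c_ne_nil hG), p.last G hG]
  compat G hG F hF hFG := RipsHtpy.appendLeft [x] (p.compat G hG F hF hFG)

/-- Reversal of a generalized path. -/
def GenPath.rev {x y : X} (p : GenPath X x y) : GenPath X y x where
  c G := (p.c (SetRel.symmetrize G)).reverse
  chain G hG := by
    have h := p.chain _ (symmetrize_mem_uniformity hG)
    exact List.isChain_reverse.mpr (List.IsChain.imp (fun a b hab => hab.2) h)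
  head G hG := by
    rw [List.head?_reverse, p.last _ (symmetrize_mem_uniformity hG)]
  last G hG := by
    rw [List.getLast?_reverse, p.head _ (symmetrize_mem_uniformity hG)]
  compat G hG F hF hFG := by
    have hsub : SetRel.symmetrize F ⊆ SetRel.symmetrize G := fun q hq => ⟨hFG hq.1, hFG hq.2⟩
    have h := p.compat _ (symmetrize_mem_uniformity hG) _ (symmetrize_mem_uniformity hF) hsub
    have hsym : ∀ a b : X, (a, b) ∈ SetRel.symmetrize G → (b, a) ∈ SetRel.symmetrize G :=
      fun a b hab => ⟨hab.2, hab.1⟩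
    exact RipsHtpy.mono ((SetRel.symmetrize_subset_self (R := G))) (RipsHtpy.rev hsym h)

theorem join_of_chain {F : Set (X × X)} (h : ∀ x y : X, (x, y) ∈ F → Nonempty (GenPath X x y)) :
    ∀ (l : List X) (x y : X), IsEChain F l → l.head? = some x → l.getLast? = some y →
      Nonempty (GenPath X x y) := by
  intro l
  induction l with
  | nil => intro x y _ hh _; simp at hh
  | cons u rest ih =>
    intro x y hch hh hl
    simp only [List.head?_cons, Option.some.injEq] at hh
    subst hh
    cases rest with
    | nil =>
        simp only [List.getLast?_singleton, Option.some.injEq] at hl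
        subst hl
        exact ⟨GenPath.refl' u⟩
    | cons v s =>
        have h1 : (u, v) ∈ F := (List.isChain_cons_cons.mp hch).1
        have hch' : IsEChain F (v :: s) := (List.isChain_cons_cons.mp hch).2
        obtain ⟨p⟩ := h u v h1
        obtain ⟨q⟩ := ih v y hch' rfl (by simpa using hl)
        exact ⟨p.concat q⟩

end Aux

/-- For a chain connected uniform space, `X` is uniformly joinable iff the endpoint
projection `π_X : GP(X,x₀) → X` generates the uniform structure of `X`. -/
theorem uniformlyJoinable_iff_endpoint_generates [UniformSpace X] (x₀ : X)
    (hcc : ChainConnected X) :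
    UniformlyJoinable X ↔
      ((∀ S ∈ 𝓤 X, ∃ E ∈ 𝓤 X, piEstarGP x₀ E ⊆ S) ∧
        (∀ E ∈ 𝓤 X, piEstarGP x₀ E ∈ 𝓤 X)) := by
  constructor
  · intro hUJ
    have hjoin : ∀ a : X, Nonempty (GenPath X x₀ a) := by
      obtain ⟨F, hF, hshort⟩ := hUJ Set.univ Filter.univ_mem
      intro a
      obtain ⟨l, hl, hh, hlast⟩ := hcc F hF x₀ a
      exact join_of_chain (fun x y hxy => ⟨(hshort x y hxy).choose⟩) l x₀ a hl hh hlast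
    refine ⟨?_, ?_⟩
    · -- the images refine the uniformity: `piEstarGP x₀ S ⊆ S`
      intro S hS
      refine ⟨S, hS, ?_⟩
      rintro z ⟨⟨⟨a, p⟩, ⟨b, q⟩⟩, hmem, rfl⟩
      obtain ⟨xc, xd, yc, yd, h1, h2, h3, h4, h5, h6, h7⟩ := hmem
      have ha : a = yc := by
        rw [p.last S hS] at h3; exact Option.some.inj h3
      have hb : b = yd := by
        rw [q.last S hS] at h4; exact Option.some.inj h4
      show (a, b) ∈ S
      rw [ha, hb]; exact h6
    · -- the images are entourages
      intro E hE
      have hr : ∀ x : X, (x, x) ∈ E := fun x => refl_mem_uniformity hE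
      have hE'u : SetRel.symmetrize E ∈ 𝓤 X := symmetrize_mem_uniformity hE
      have hE'E : SetRel.symmetrize E ⊆ E := (SetRel.symmetrize_subset_self (R := E))
      obtain ⟨F, hF, hshort⟩ := hUJ (SetRel.symmetrize E) hE'u
      refine Filter.mem_of_superset hF ?_
      rintro ⟨a, b⟩ hab
      obtain ⟨p, hpE', hph⟩ := hshort a b hab
      have hab' : (a, b) ∈ E := hE'E hpE'
      have hba : (b, a) ∈ E := hpE'.2
      obtain ⟨q₀⟩ := hjoin a
      set q : GenPath X x₀ a := q₀.pad with hqdef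
      -- decompose the chain `q.c E`
      have hq0h := q₀.head E hE
      obtain ⟨rest, hrest⟩ : ∃ rest, q₀.c E = x₀ :: rest := by
        cases hqc : q₀.c E with
        | nil => rw [hqc] at hq0h; simp at hq0h
        | cons w t =>
            rw [hqc] at hq0h
            simp only [List.head?_cons, Option.some.injEq] at hq0h
            exact ⟨t, by rw [hq0h]⟩
      have hcE : q.c E = x₀ :: x₀ :: rest := by
        show x₀ :: q₀.c E = _
        rw [hrest]
      obtain ⟨c', u, z, hdec, hlastz⟩ := two_last rest x₀ x₀
      have hza : z = a := by
        have h := q.last E hE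
        rw [hcE] at h
        rw [hlastz] at h
        exact Option.some.inj h
      subst hza
      have hchain := q.chain E hE
      rw [hcE, hdec] at hchain
      have huz : (u, z) ∈ E := List.isChain_pair.mp (List.isChain_append.mp hchain).2.1
      have hT : RipsHtpy E (p.c E) [z, b] :=
        (p.compat E hE _ hE'u hE'E).symm.trans (RipsHtpy.mono hE'E hph)
      refine ⟨(⟨z, q⟩, ⟨b, q.concat p⟩), ?_, rfl⟩
      show EHomotopic E (q.c E) (q.c E ++ p.c E)
      have key : RipsHtpy E (q.c E) (x₀ :: ((q.c E ++ p.c E) ++ [z])) := by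
        have h1 : RipsHtpy E (q.c E) (q.c E ++ [b, z]) := by
          rw [hcE, hdec]
          exact backtrack_htpy hr c' u z b huz hab' hba
        have h2 : RipsHtpy E (q.c E ++ [b, z]) ((q.c E ++ [z, b]) ++ [z]) := by
          rw [hcE, hdec]
          have := RipsHtpy.ins (c' ++ [u]) [z] z z b (hr z) hab' hab'
          simpa [List.append_assoc] using this
        have h3 : RipsHtpy E ((q.c E ++ [z, b]) ++ [z]) ((q.c E ++ p.c E) ++ [z]) :=
          RipsHtpy.appendRight [z] (RipsHtpy.appendLeft (q.c E) hT.symm)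
        have h4 : RipsHtpy E (q.c E) (x₀ :: q.c E) := by
          rw [hcE]
          exact RipsHtpy.dupHead rest x₀ x₀ (hr x₀) (hr x₀)
        have h5 : RipsHtpy E (x₀ :: q.c E) (x₀ :: ((q.c E ++ p.c E) ++ [z])) :=
          RipsHtpy.appendLeft [x₀] (h1.trans (h2.trans h3))
        exact h4.trans h5
      refine ⟨x₀, x₀, z, b, ?_, ?_, ?_, ?_, hr x₀, hab', key⟩
      · rw [hcE]; rfl
      · rw [List.head?_append_of_ne_nil _ (q.c_ne_nil hE)]
        exact q.head E hE
      · exact q.last E hE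
      · rw [List.getLast?_append_of_ne_nil _ (p.c_ne_nil hE)]
        exact p.last E hE
  · rintro ⟨hg1, hg2⟩
    intro E hE
    have hE'u : SetRel.symmetrize E ∈ 𝓤 X := symmetrize_mem_uniformity hE
    have hE'E : SetRel.symmetrize E ⊆ E := (SetRel.symmetrize_subset_self (R := E))
    have hsym : ∀ a b : X, (a, b) ∈ SetRel.symmetrize E → (b, a) ∈ SetRel.symmetrize E :=
      fun a b hab => ⟨hab.2, hab.1⟩
    have hrefl : ∀ x : X, (x, x) ∈ SetRel.symmetrize E := fun x => refl_mem_uniformity hE'u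
    refine ⟨piEstarGP x₀ (SetRel.symmetrize E), hg2 _ hE'u, ?_⟩
    intro a b hab
    obtain ⟨⟨⟨y₁, p⟩, ⟨y₂, q⟩⟩, hmem, heq⟩ := hab
    have h1 : a = y₁ := (congrArg Prod.fst heq).symm
    have h2 : b = y₂ := (congrArg Prod.snd heq).symm
    subst h1; subst h2
    obtain ⟨xc, xd, yc, yd, hh1, hh2, hh3, hh4, hh5, hh6, hh7⟩ := hmem
    have hxc : x₀ = xc := by
      rw [p.head _ hE'u] at hh1; exact Option.some.inj hh1
    have hyc : a = yc := by
      rw [p.last _ hE'u] at hh3; exact Option.some.inj hh3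
    have hyd : b = yd := by
      rw [q.last _ hE'u] at hh4; exact Option.some.inj hh4
    subst hxc; subst hyc; subst hyd
    refine ⟨(p.rev).concat q, hE'E hh6, ?_⟩
    show RipsHtpy E ((p.c (SetRel.symmetrize E)).reverse ++ q.c E) [a, b]
    set m := q.c (SetRel.symmetrize E) with hm
    have s1 : RipsHtpy E ((p.c (SetRel.symmetrize E)).reverse ++ q.c E)
        ((p.c (SetRel.symmetrize E)).reverse ++ m) :=
      RipsHtpy.appendLeft _ (RipsHtpy.symm (q.compat E hE _ hE'u hE'E))
    have s2 : RipsHtpy (SetRel.symmetrize E) (p.c (SetRel.symmetrize E)).reverse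
        (a :: (m.reverse ++ [x₀])) := by
      have h := RipsHtpy.rev hsym hh7
      have e : (x₀ :: (m ++ [a])).reverse = a :: (m.reverse ++ [x₀]) := by simp
      rw [e] at h
      exact h
    have hchm : IsEChain (SetRel.symmetrize E) (x₀ :: m) := by
      refine List.isChain_cons.mpr ⟨?_, q.chain _ hE'u⟩
      intro w hw
      rw [q.head _ hE'u] at hw
      simp only [Option.mem_some_iff] at hw
      subst hw
      exact hrefl x₀
    have hlm : (x₀ :: m).getLast? = some b := by
      rw [show x₀ :: m = [x₀] ++ m from rfl,
        List.getLast?_append_of_ne_nil _ (q.c_ne_nil hE'u)]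
      exact q.last _ hE'u
    have s3 : RipsHtpy (SetRel.symmetrize E) (a :: ((x₀ :: m).reverse ++ (x₀ :: m).tail))
        [a, b] := cancel_htpy hsym hrefl (x₀ :: m) a b hchm hlm hh6
    have e3 : a :: ((x₀ :: m).reverse ++ (x₀ :: m).tail)
        = (a :: (m.reverse ++ [x₀])) ++ m := by simp
    rw [e3] at s3
    have s2' : RipsHtpy E ((p.c (SetRel.symmetrize E)).reverse ++ m)
        ((a :: (m.reverse ++ [x₀])) ++ m) :=
      RipsHtpy.appendRight m (RipsHtpy.mono hE'E s2)
    exact s1.trans (s2'.trans (RipsHtpy.mono hE'E s3))
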